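/- Let α > 0 and ρ(x) = e^{−α|x|²} for x ∈ ℝ³. Then for all x ∈ ℝ³: 8ρ(x) + 7 x·∇ρ(x) + x·(D²ρ(x) x) = 4 e^{−α|x|²} (α²|x|⁴ − 4α|x|² + 2). In particular, this quantity is negative exactly when √((2−√2)/α) < |x| < √((2+√2)/α), so the positivity condition 8ρ + 7 x·∇ρ + x·(D²ρ x) > 0 on ℝ³ fails for every α > 0. -/

import Mathlib

open Real

noncomputable section

/-- Euclidean space `ℝ³`. -/
abbrev E3 := EuclideanSpace ℝ (Fin 3)

/-- The Gaussian doping profile `ρ(x) = e^{−α|x|²}`. -/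
def gauss (α : ℝ) (x : E3) : ℝ := Real.exp (-α * ‖x‖ ^ 2)

/-- The expression `8ρ(x) + 7 x·∇ρ(x) + x·(D²ρ(x)x)` for a function `ρ`,
where `x·∇ρ(x)` is the Fréchet derivative of `ρ` applied to `x` and
`x·(D²ρ(x)x)` is the Hessian quadratic form at `x` evaluated at `x`. -/
def posExpr (ρ : E3 → ℝ) (x : E3) : ℝ :=
  8 * ρ x + 7 * fderiv ℝ ρ x x + fderiv ℝ (fderiv ℝ ρ) x x x

lemma hasFDerivAt_gauss (α : ℝ) (x : E3) : HasFDerivAt (gauss α)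
    ((-2*α*Real.exp (-α*‖x‖^2)) • innerSL ℝ x) x := by
  have h1 : HasFDerivAt (fun y : E3 => ‖y‖^2) (2 • innerSL ℝ x) x :=
    (hasStrictFDerivAt_norm_sq x).hasFDerivAt
  have h2 : HasFDerivAt (fun y : E3 => -α * ‖y‖^2) ((-α) • (2 • innerSL ℝ x)) x :=
    h1.const_smul (-α)
  have h3 := (Real.hasDerivAt_exp (-α*‖x‖^2)).comp_hasFDerivAt x h2
  refine h3.congr_fderiv ?_
  ext v
  simp [gauss]
  ring

lemma fderiv_gauss (α : ℝ) : fderiv ℝ (gauss α) =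
    fun x => (-2*α*Real.exp (-α*‖x‖^2)) • innerSL ℝ x := by
  funext x
  exact (hasFDerivAt_gauss α x).fderiv

/-- The inner product as a continuous linear map into continuous linear maps. -/
def L : E3 →L[ℝ] E3 →L[ℝ] ℝ := innerSL ℝ

lemma hasFDerivAt_fderiv_gauss (α : ℝ) (x : E3) :
    HasFDerivAt (fderiv ℝ (gauss α))
      ((-2*α*Real.exp (-α*‖x‖^2)) • L
        + ((-2*α) • ((-2*α*Real.exp (-α*‖x‖^2)) • innerSL ℝ x)).smulRight (innerSL ℝ x)) x := by
  rw [fderiv_gauss]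
  have hc : HasFDerivAt (fun y : E3 => -2*α*Real.exp (-α*‖y‖^2))
      ((-2*α) • ((-2*α*Real.exp (-α*‖x‖^2)) • innerSL ℝ x)) x := by
    have := (hasFDerivAt_gauss α x).const_smul (-2*α)
    exact this
  have hL : HasFDerivAt (fun y : E3 => innerSL ℝ y) L x := L.hasFDerivAt
  exact hc.smul hL

lemma posExpr_gauss_eq (α : ℝ) (x : E3) :
    posExpr (gauss α) x
      = 4 * Real.exp (-α * ‖x‖ ^ 2) * (α^2 * ‖x‖ ^ 4 - 4*α*‖x‖ ^ 2 + 2) := by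
  unfold posExpr
  rw [(hasFDerivAt_gauss α x).fderiv, (hasFDerivAt_fderiv_gauss α x).fderiv]
  simp only [ContinuousLinearMap.add_apply, ContinuousLinearMap.smul_apply,
    ContinuousLinearMap.smulRight_apply, innerSL_apply_apply, L, real_inner_self_eq_norm_sq,
    smul_eq_mul, gauss]
  have hxx : (innerSL ℝ x) x = ‖x‖ ^ 2 := by simp
  rw [hxx]
  ring

/-- For the Gaussian `ρ(x) = e^{−α|x|²}` (`α > 0`):
`8ρ + 7x·∇ρ + x·(D²ρx) = 4e^{−α|x|²}(α²|x|⁴ − 4α|x|² + 2)`; this quantity is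
negative exactly when `√((2−√2)/α) < |x| < √((2+√2)/α)`, so the positivity
condition `8ρ + 7x·∇ρ + x·(D²ρx) > 0` on `ℝ³` fails for every `α > 0`. -/
theorem gauss_posExpr (α : ℝ) (hα : 0 < α) :
    (∀ x : E3, posExpr (gauss α) x
        = 4 * Real.exp (-α * ‖x‖ ^ 2) * (α^2 * ‖x‖ ^ 4 - 4*α*‖x‖ ^ 2 + 2)) ∧
    (∀ x : E3, (posExpr (gauss α) x < 0 ↔
        Real.sqrt ((2 - Real.sqrt 2)/α) < ‖x‖ ∧
          ‖x‖ < Real.sqrt ((2 + Real.sqrt 2)/α))) ∧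
    ¬ (∀ x : E3, 0 < posExpr (gauss α) x) := by
  have hs2 : Real.sqrt 2 ^ 2 = 2 := Real.sq_sqrt (by norm_num)
  have hs2' : (1:ℝ) < Real.sqrt 2 := by nlinarith [Real.sqrt_nonneg 2]
  have hs2'' : Real.sqrt 2 < 2 := by nlinarith [Real.sqrt_nonneg 2]
  have key : ∀ x : E3, (posExpr (gauss α) x < 0 ↔
      Real.sqrt ((2 - Real.sqrt 2)/α) < ‖x‖ ∧
        ‖x‖ < Real.sqrt ((2 + Real.sqrt 2)/α)) := by
    intro x
    set t : ℝ := ‖x‖ ^ 2 with ht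
    have ht0 : 0 ≤ t := by positivity
    have ha0 : 0 ≤ (2 - Real.sqrt 2)/α := by
      apply div_nonneg (by linarith) hα.le
    have hb0 : 0 ≤ (2 + Real.sqrt 2)/α := by positivity
    have hxsq : ‖x‖ = Real.sqrt t := (Real.sqrt_sq (norm_nonneg x)).symm
    have hia : Real.sqrt ((2 - Real.sqrt 2)/α) < ‖x‖ ↔ (2 - Real.sqrt 2)/α < t := by
      rw [hxsq, Real.sqrt_lt_sqrt_iff ha0]
    have hib : ‖x‖ < Real.sqrt ((2 + Real.sqrt 2)/α) ↔ t < (2 + Real.sqrt 2)/α := by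
      rw [hxsq, Real.sqrt_lt_sqrt_iff ht0]
    rw [posExpr_gauss_eq α x, hia, hib]
    have hg : 0 < 4 * Real.exp (-α * ‖x‖ ^ 2) := by positivity
    have h1 : α * ((2 - Real.sqrt 2)/α) = 2 - Real.sqrt 2 := by
      field_simp
    have h2 : α * ((2 + Real.sqrt 2)/α) = 2 + Real.sqrt 2 := by
      field_simp
    have hquad : α^2 * ‖x‖ ^ 4 - 4*α*‖x‖ ^ 2 + 2
        = (α * t - (2 - Real.sqrt 2)) * (α * t - (2 + Real.sqrt 2)) := by
      have : ‖x‖ ^ 4 = t ^ 2 := by rw [ht]; ring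
      rw [this]; nlinarith [hs2]
    constructor
    · intro h
      have hq : (α * t - (2 - Real.sqrt 2)) * (α * t - (2 + Real.sqrt 2)) < 0 := by
        nlinarith [hg]
      constructor
      · by_contra hc
        push_neg at hc
        have : α * t ≤ 2 - Real.sqrt 2 := by
          calc α * t ≤ α * ((2 - Real.sqrt 2)/α) := by
                exact mul_le_mul_of_nonneg_left hc hα.le
            _ = 2 - Real.sqrt 2 := h1
        nlinarith
      · by_contra hc
        push_neg at hc
        have : 2 + Real.sqrt 2 ≤ α * t := by
          calc 2 + Real.sqrt 2 = α * ((2 + Real.sqrt 2)/α) := h2.symm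
            _ ≤ α * t := mul_le_mul_of_nonneg_left hc hα.le
        nlinarith
    · rintro ⟨hl, hr⟩
      have hl' : 2 - Real.sqrt 2 < α * t := by
        calc 2 - Real.sqrt 2 = α * ((2 - Real.sqrt 2)/α) := h1.symm
          _ < α * t := by exact mul_lt_mul_of_pos_left hl hα
      have hr' : α * t < 2 + Real.sqrt 2 := by
        calc α * t < α * ((2 + Real.sqrt 2)/α) := mul_lt_mul_of_pos_left hr hα
          _ = 2 + Real.sqrt 2 := h2
      nlinarith [hg, mul_pos (sub_pos.mpr hl') (sub_pos.mpr hr')]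
  refine ⟨posExpr_gauss_eq α, key, ?_⟩
  intro h
  set x0 : E3 := EuclideanSpace.single 0 (Real.sqrt (2/α)) with hx0
  have hn : ‖x0‖ = Real.sqrt (2/α) := by
    rw [hx0, EuclideanSpace.norm_single]
    exact abs_of_nonneg (Real.sqrt_nonneg _)
  have hnsq : ‖x0‖ ^ 2 = 2/α := by
    rw [hn]; exact Real.sq_sqrt (by positivity)
  have hval := posExpr_gauss_eq α x0
  have hq : α^2 * ‖x0‖ ^ 4 - 4*α*‖x0‖ ^ 2 + 2 = -2 := by
    have h4 : ‖x0‖ ^ 4 = (2/α)^2 := by rw [← hnsq]; ring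
    rw [h4, hnsq]
    field_simp
    ring
  have := h x0
  rw [hval, hq] at this
  nlinarith [Real.exp_pos (-α * ‖x0‖ ^ 2)]

end
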